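/- The combined r-matrix r(u,v) = η·c₂/(u−v) + ζ·(h⊗f − f⊗h) satisfies the classical Yang–Baxter equation [r₁₂,r₁₃]+[r₁₂,r₂₃]+[r₁₃,r₂₃] = 0 in U(sl₂)^{⊗3}⊗ℂ(u₁,u₂,u₃) for all scalars η, ζ. -/

import Mathlib

set_option maxHeartbeats 4000000
set_option synthInstance.maxHeartbeats 1000000


open TensorProduct

private lemma cybe_aux {K : Type*} [Field K] [CharZero K] {A : Type*} [Ring A] [Algebra K A]
    (h e f : A)
    (rel_he : h * e - e * h = 2 * e)
    (rel_hf : h * f - f * h = -2 * f)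
    (rel_ef : e * f - f * e = h)
    (p q s z : K) (hpqr : p * q - p * s + q * s = 0) :
    (let c12 : A ⊗[K] (A ⊗[K] A) :=
      e ⊗ₜ (f ⊗ₜ 1) + f ⊗ₜ (e ⊗ₜ 1) + ((1 : K) / 2) • (h ⊗ₜ (h ⊗ₜ 1))
    let c13 : A ⊗[K] (A ⊗[K] A) :=
      e ⊗ₜ (1 ⊗ₜ f) + f ⊗ₜ (1 ⊗ₜ e) + ((1 : K) / 2) • (h ⊗ₜ (1 ⊗ₜ h))
    let c23 : A ⊗[K] (A ⊗[K] A) :=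
      1 ⊗ₜ (e ⊗ₜ f) + 1 ⊗ₜ (f ⊗ₜ e) + ((1 : K) / 2) • ((1 : A) ⊗ₜ (h ⊗ₜ h))
    let w12 : A ⊗[K] (A ⊗[K] A) := h ⊗ₜ (f ⊗ₜ 1) - f ⊗ₜ (h ⊗ₜ 1)
    let w13 : A ⊗[K] (A ⊗[K] A) := h ⊗ₜ (1 ⊗ₜ f) - f ⊗ₜ (1 ⊗ₜ h)
    let w23 : A ⊗[K] (A ⊗[K] A) := 1 ⊗ₜ (h ⊗ₜ f) - 1 ⊗ₜ (f ⊗ₜ h)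
    let r12 := p • c12 + z • w12
    let r13 := q • c13 + z • w13
    let r23 := s • c23 + z • w23
    (r12 * r13 - r13 * r12) + (r12 * r23 - r23 * r12) +
      (r13 * r23 - r23 * r13) = 0) := by
  intro c12 c13 c23 w12 w13 w23 r12 r13 r23
  have h2e : (2 : A) * e = e + e := two_mul e
  have hHE : h * e = (e + e) + e * h := by rw [← h2e]; exact sub_eq_iff_eq_add.mp rel_he
  have heh : e * h = h * e - (e + e) := by rw [hHE]; abel
  have h2f : (-2 : A) * f = -(f + f) := by rw [neg_mul, two_mul]
  have hHF : h * f = -(f + f) + f * h := by rw [← h2f]; exact sub_eq_iff_eq_add.mp rel_hf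
  have hfh : f * h = h * f + (f + f) := by rw [hHF]; abel
  have hfe : f * e = e * f - h := by rw [sub_eq_iff_eq_add.mp rel_ef]; abel
  unfold r12 r13 r23 c12 c13 c23 w12 w13 w23
  simp (config := { maxSteps := 10000000 }) only [mul_add, add_mul, sub_mul, mul_sub,
    smul_mul_assoc, mul_smul_comm, smul_smul,
    Algebra.TensorProduct.tmul_mul_tmul, one_mul, mul_one,
    heh, hfh, hfe,
    TensorProduct.add_tmul, TensorProduct.sub_tmul, TensorProduct.tmul_add,
    TensorProduct.tmul_sub, smul_add, smul_sub]
  match_scalars <;>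
    first
      | ring1
      | linear_combination hpqr
      | linear_combination -hpqr
      | linear_combination hpqr / 2
      | linear_combination -hpqr / 2
      | linear_combination (3 / 2 : K) * hpqr
      | linear_combination (-3 / 2 : K) * hpqr
      | linear_combination (2 : K) * hpqr
      | linear_combination (-2 : K) * hpqr

/-- The combined rational-plus-twist r-matrix
r_{ij} = η (c₂)_{ij}/(uᵢ−uⱼ) + ζ (h⊗f − f⊗h)_{ij} satisfies the classical
Yang–Baxter equation in U(sl₂)^{⊗3} ⊗ ℂ(u₁,u₂,u₃) for all scalars η, ζ ∈ ℂ. -/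
theorem stmt_17 {A : Type*} [Ring A]
    [Algebra (FractionRing (MvPolynomial (Fin 3) ℂ)) A] (h e f : A) (η ζ : ℂ)
    (rel_he : h * e - e * h = 2 * e)
    (rel_hf : h * f - f * h = -2 * f)
    (rel_ef : e * f - f * e = h) :
    let K := FractionRing (MvPolynomial (Fin 3) ℂ)
    let ι : ℂ → K := fun z =>
      algebraMap (MvPolynomial (Fin 3) ℂ) K (MvPolynomial.C z)
    let u : Fin 3 → K := fun i => algebraMap (MvPolynomial (Fin 3) ℂ) K (MvPolynomial.X i)
    let c12 : A ⊗[K] (A ⊗[K] A) :=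
      e ⊗ₜ (f ⊗ₜ 1) + f ⊗ₜ (e ⊗ₜ 1) + ((1 : K) / 2) • (h ⊗ₜ (h ⊗ₜ 1))
    let c13 : A ⊗[K] (A ⊗[K] A) :=
      e ⊗ₜ (1 ⊗ₜ f) + f ⊗ₜ (1 ⊗ₜ e) + ((1 : K) / 2) • (h ⊗ₜ (1 ⊗ₜ h))
    let c23 : A ⊗[K] (A ⊗[K] A) :=
      1 ⊗ₜ (e ⊗ₜ f) + 1 ⊗ₜ (f ⊗ₜ e) + ((1 : K) / 2) • ((1 : A) ⊗ₜ (h ⊗ₜ h))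
    let w12 : A ⊗[K] (A ⊗[K] A) := h ⊗ₜ (f ⊗ₜ 1) - f ⊗ₜ (h ⊗ₜ 1)
    let w13 : A ⊗[K] (A ⊗[K] A) := h ⊗ₜ (1 ⊗ₜ f) - f ⊗ₜ (1 ⊗ₜ h)
    let w23 : A ⊗[K] (A ⊗[K] A) := 1 ⊗ₜ (h ⊗ₜ f) - 1 ⊗ₜ (f ⊗ₜ h)
    let r12 := (ι η * (u 0 - u 1)⁻¹) • c12 + ι ζ • w12
    let r13 := (ι η * (u 0 - u 2)⁻¹) • c13 + ι ζ • w13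
    let r23 := (ι η * (u 1 - u 2)⁻¹) • c23 + ι ζ • w23
    (r12 * r13 - r13 * r12) + (r12 * r23 - r23 * r12) +
      (r13 * r23 - r23 * r13) = 0 := by
  intro K ι u c12 c13 c23 w12 w13 w23 r12 r13 r23
  have hinj : Function.Injective (algebraMap (MvPolynomial (Fin 3) ℂ) K) :=
    IsFractionRing.injective _ _
  have hne : ∀ i j : Fin 3, i ≠ j → u i - u j ≠ 0 := by
    intro i j hij
    simp only [u]
    rw [sub_ne_zero]
    exact fun hcon => hij (MvPolynomial.X_injective (hinj hcon))
  have h01 : u 0 - u 1 ≠ 0 := hne 0 1 (by decide)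
  have h02 : u 0 - u 2 ≠ 0 := hne 0 2 (by decide)
  have h12 : u 1 - u 2 ≠ 0 := hne 1 2 (by decide)
  have habc : (u 0 - u 1)⁻¹ * (u 0 - u 2)⁻¹ - (u 0 - u 1)⁻¹ * (u 1 - u 2)⁻¹
      + (u 0 - u 2)⁻¹ * (u 1 - u 2)⁻¹ = 0 := by
    linear_combination (-((u 0 - u 1)⁻¹ * (u 0 - u 2)⁻¹)) * mul_inv_cancel₀ h12
      + ((u 0 - u 1)⁻¹ * (u 1 - u 2)⁻¹) * mul_inv_cancel₀ h02
      - ((u 0 - u 2)⁻¹ * (u 1 - u 2)⁻¹) * mul_inv_cancel₀ h01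
  have hpqr : (ι η * (u 0 - u 1)⁻¹) * (ι η * (u 0 - u 2)⁻¹)
      - (ι η * (u 0 - u 1)⁻¹) * (ι η * (u 1 - u 2)⁻¹)
      + (ι η * (u 0 - u 2)⁻¹) * (ι η * (u 1 - u 2)⁻¹) = 0 := by
    linear_combination (ι η * ι η) * habc
  exact cybe_aux h e f rel_he rel_hf rel_ef
    (ι η * (u 0 - u 1)⁻¹) (ι η * (u 0 - u 2)⁻¹) (ι η * (u 1 - u 2)⁻¹) (ι ζ) hpqr
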